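/- Let C be an infinite set and H := ℓ²(C). Then for every natural number m, the orbit space B(H)^m / O(H) is compact, where B(H) is the closed unit ball of H with the norm topology, O(H) is the group of linear isometric automorphisms of H acting diagonally on B(H)^m, and the orbit space carries the quotient topology. Equivalently, B(H)^m with the quotient pseudometric (d/O(H))((x_i),(y_i)) := inf_{g∈O(H)} max_i ‖x_i − g·y_i‖ is compact. -/

import Mathlib

noncomputable section

/-- `ℓ²(C)`, the real Hilbert space of square-summable functions `C → ℝ`. -/
abbrev l2 (C : Type) : Type := lp (fun _ : C => ℝ) 2

/-- The topology induced by a pseudometric `d` : the one generated by the open balls of `d`. -/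
def ballTopology {X : Type*} (d : X → X → ℝ) : TopologicalSpace X :=
  TopologicalSpace.generateFrom {s | ∃ x ε, 0 < ε ∧ s = {y | d x y < ε}}

open Submodule Module

/-- Combine an orthonormal basis of a finite-dimensional subspace `W` with a Hilbert basis
of `Wᗮ` to a Hilbert basis of the whole space. -/
private lemma exists_hilbertBasis_sum {E : Type*} [NormedAddCommGroup E]
    [InnerProductSpace ℝ E] [CompleteSpace E] (W : Submodule ℝ E) [FiniteDimensional ℝ W]
    {n : ℕ} (b : OrthonormalBasis (Fin n) ℝ W) {w : Set ↥Wᗮ} (hb : HilbertBasis w ℝ ↥Wᗮ)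
    (hbc : ⇑hb = ((↑) : w → ↥Wᗮ)) :
    ∃ B : HilbertBasis (Fin n ⊕ w) ℝ E,
      ∀ i : Fin n, B (Sum.inl i) = (b i : E) := by
  classical
  haveI : CompleteSpace ↥Wᗮ := (Submodule.isClosed_orthogonal W).completeSpace_coe
  set F : Fin n ⊕ w → E := Sum.elim (fun i => (b i : E)) (fun j => ((j : ↥Wᗮ) : E)) with hF
  have hWmem : ∀ i : Fin n, ((b i : E)) ∈ W := fun i => (b i).2
  have horth : Orthonormal ℝ F := by
    rw [orthonormal_iff_ite]
    have hbo := orthonormal_iff_ite.mp b.orthonormal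
    have hwo := orthonormal_iff_ite.mp hb.orthonormal
    rintro (i | p) (j | q)
    · simpa [F, Submodule.coe_inner] using hbo i j
    · have hq : ((q : ↥Wᗮ) : E) ∈ Wᗮ := (q : ↥Wᗮ).2
      simp [F, (Submodule.mem_orthogonal W _).mp hq _ (hWmem i)]
    · have hp : ((p : ↥Wᗮ) : E) ∈ Wᗮ := (p : ↥Wᗮ).2
      simp [F, (Submodule.mem_orthogonal' W _).mp hp _ (hWmem j)]
    · have h1 := hwo p q
      rw [congrFun hbc p, congrFun hbc q] at h1
      have h2 : (inner ℝ ((p : ↥Wᗮ)) ((q : ↥Wᗮ)) : ℝ)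
          = inner ℝ (((p : ↥Wᗮ) : E)) (((q : ↥Wᗮ) : E)) := Submodule.coe_inner _ _ _
      rw [h2] at h1
      rw [show F (Sum.inr p) = ((p : ↥Wᗮ) : E) from rfl,
        show F (Sum.inr q) = ((q : ↥Wᗮ) : E) from rfl, h1]
      simp
  have hspanW : span ℝ (Set.range fun i : Fin n => (b i : E)) = W := by
    have : (Set.range fun i : Fin n => (b i : E)) = W.subtype '' Set.range ⇑b := by
      rw [← Set.range_comp]; rfl
    rw [this, ← Submodule.map_span, ← OrthonormalBasis.coe_toBasis b, b.toBasis.span_eq,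
      Submodule.map_top, Submodule.range_subtype]
  have hdense : ⊤ ≤ (span ℝ (Set.range F)).topologicalClosure := by
    intro z _
    have hz : z ∈ W ⊔ Wᗮ := by rw [Submodule.sup_orthogonal_of_hasOrthogonalProjection]; trivial
    obtain ⟨a, ha, c, hc, rfl⟩ := Submodule.mem_sup.1 hz
    refine Submodule.add_mem _ ?_ ?_
    · apply Submodule.le_topologicalClosure
      apply span_mono (Set.range_comp_subset_range Sum.inl F)
      rw [show F ∘ Sum.inl = fun i : Fin n => (b i : E) from rfl, hspanW]
      exact ha
    · -- c ∈ Wᗮ : approximate within Wᗮ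
      have hcc : (⟨c, hc⟩ : ↥Wᗮ) ∈ closure (span ℝ (Set.range ⇑hb) : Set ↥Wᗮ) := by
        rw [← Submodule.topologicalClosure_coe, hb.dense_span]; trivial
      have himg : (Wᗮ.subtype '' closure (span ℝ (Set.range ⇑hb) : Set ↥Wᗮ)) ⊆
          closure (Wᗮ.subtype '' (span ℝ (Set.range ⇑hb) : Set ↥Wᗮ)) :=
        image_closure_subset_closure_image continuous_subtype_val
      have hc2 : c ∈ closure (Wᗮ.subtype '' (span ℝ (Set.range ⇑hb) : Set ↥Wᗮ)) :=
        himg ⟨_, hcc, rfl⟩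
      have hsub : (⇑Wᗮ.subtype '' (span ℝ (Set.range ⇑hb) : Set ↥Wᗮ)) ⊆
          (span ℝ (Set.range F) : Set E) := by
        rintro t ⟨u, hu, rfl⟩
        have h2 : Wᗮ.subtype u ∈ map Wᗮ.subtype (span ℝ (Set.range ⇑hb)) := ⟨u, hu, rfl⟩
        rw [Submodule.map_span] at h2
        refine span_mono ?_ h2
        rintro t ⟨y, ⟨j, rfl⟩, rfl⟩
        exact ⟨Sum.inr j, by simp [F, congrFun hbc j]⟩
      show c ∈ closure (span ℝ (Set.range F) : Set E)
      exact closure_mono hsub hc2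
  refine ⟨HilbertBasis.mk horth hdense, fun i => ?_⟩
  rw [HilbertBasis.coe_mk]
  rfl

open Submodule Module in
private lemma exists_isometryEquiv_map_mem {E : Type*} [NormedAddCommGroup E]
    [InnerProductSpace ℝ E] [CompleteSpace E] (U V : Submodule ℝ E)
    [FiniteDimensional ℝ U] [FiniteDimensional ℝ V]
    (h : finrank ℝ U ≤ finrank ℝ V) :
    ∃ g : E ≃ₗᵢ[ℝ] E, ∀ x ∈ U, g x ∈ V := by
  classical
  set W : Submodule ℝ E := U ⊔ V with hW
  haveI : FiniteDimensional ℝ W := inferInstance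
  set n := finrank ℝ ↥W with hn
  set k := finrank ℝ ↥U with hk
  set mV := finrank ℝ ↥V with hmV
  have hUW : U ≤ W := le_sup_left
  have hVW : V ≤ W := le_sup_right
  have hkn : k ≤ n := Submodule.finrank_mono hUW
  have hmn : mV ≤ n := Submodule.finrank_mono hVW
  have hkm : k ≤ mV := h
  set bU := stdOrthonormalBasis ℝ ↥U with hbU
  set bV := stdOrthonormalBasis ℝ ↥V with hbV
  set fU : Fin n → ↥W := fun i => if h : (i : ℕ) < k then ⟨bU ⟨i, h⟩, hUW (bU ⟨i, h⟩).2⟩ else 0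
    with hfUdef
  set fV : Fin n → ↥W := fun i => if h : (i : ℕ) < mV then ⟨bV ⟨i, h⟩, hVW (bV ⟨i, h⟩).2⟩ else 0
    with hfVdef
  have hfU : Orthonormal ℝ (Set.restrict {i : Fin n | (i : ℕ) < k} fU) := by
    rw [orthonormal_iff_ite]
    rintro ⟨i, hi⟩ ⟨j, hj⟩
    have hUo := orthonormal_iff_ite.mp bU.orthonormal ⟨i.1, hi⟩ ⟨j.1, hj⟩
    have eUi : fU i = ⟨(bU ⟨i.1, hi⟩ : E), hUW (bU ⟨i.1, hi⟩).2⟩ := dif_pos hi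
    have eUj : fU j = ⟨(bU ⟨j.1, hj⟩ : E), hUW (bU ⟨j.1, hj⟩).2⟩ := dif_pos hj
    have h1 : (inner ℝ (fU i) (fU j) : ℝ) = inner ℝ (bU ⟨i.1, hi⟩) (bU ⟨j.1, hj⟩) := by
      rw [eUi, eUj]
      exact (Submodule.coe_inner _ _ _).trans (Submodule.coe_inner _ _ _).symm
    have hcond : ((⟨i.1, hi⟩ : Fin k) = ⟨j.1, hj⟩) ↔
        ((⟨i, hi⟩ : {i : Fin n | (i : ℕ) < k}) = ⟨j, hj⟩) := by
      simp [Fin.ext_iff, Subtype.ext_iff]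
    show inner ℝ (fU i) (fU j) = _
    simp only [Set.restrict_apply, h1, hUo, hcond]
  have hfV : Orthonormal ℝ (Set.restrict {i : Fin n | (i : ℕ) < mV} fV) := by
    rw [orthonormal_iff_ite]
    rintro ⟨i, hi⟩ ⟨j, hj⟩
    have hVo := orthonormal_iff_ite.mp bV.orthonormal ⟨i.1, hi⟩ ⟨j.1, hj⟩
    have eVi : fV i = ⟨(bV ⟨i.1, hi⟩ : E), hVW (bV ⟨i.1, hi⟩).2⟩ := dif_pos hi
    have eVj : fV j = ⟨(bV ⟨j.1, hj⟩ : E), hVW (bV ⟨j.1, hj⟩).2⟩ := dif_pos hj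
    have h1 : (inner ℝ (fV i) (fV j) : ℝ) = inner ℝ (bV ⟨i.1, hi⟩) (bV ⟨j.1, hj⟩) := by
      rw [eVi, eVj]
      exact (Submodule.coe_inner _ _ _).trans (Submodule.coe_inner _ _ _).symm
    have hcond : ((⟨i.1, hi⟩ : Fin mV) = ⟨j.1, hj⟩) ↔
        ((⟨i, hi⟩ : {i : Fin n | (i : ℕ) < mV}) = ⟨j, hj⟩) := by
      simp [Fin.ext_iff, Subtype.ext_iff]
    show inner ℝ (fV i) (fV j) = _
    simp only [Set.restrict_apply, h1, hVo, hcond]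
  obtain ⟨bWU, hbWU⟩ := hfU.exists_orthonormalBasis_extension_of_card_eq (by simp [hn])
  obtain ⟨bWV, hbWV⟩ := hfV.exists_orthonormalBasis_extension_of_card_eq (by simp [hn])
  haveI : CompleteSpace ↥Wᗮ := (Submodule.isClosed_orthogonal W).completeSpace_coe
  obtain ⟨w, hb, hbc⟩ := exists_hilbertBasis ℝ ↥Wᗮ
  obtain ⟨B1, hB1⟩ := exists_hilbertBasis_sum W bWU hb hbc
  obtain ⟨B2, hB2⟩ := exists_hilbertBasis_sum W bWV hb hbc
  refine ⟨B1.repr.trans B2.repr.symm, ?_⟩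
  have hg : ∀ t : Fin n ⊕ w, (B1.repr.trans B2.repr.symm) (B1 t) = B2 t := fun t => by
    rw [LinearIsometryEquiv.trans_apply, B1.repr_self, B2.repr_symm_single]
  have hgen : ∀ i : Fin k, (B1.repr.trans B2.repr.symm) ((bU i : E)) ∈ V := by
    intro i
    have hin : (i : ℕ) < n := lt_of_lt_of_le i.2 hkn
    set i' : Fin n := ⟨i.1, hin⟩ with hi'
    have hi'k : (i' : ℕ) < k := i.2
    have hi'm : (i' : ℕ) < mV := lt_of_lt_of_le i.2 hkm
    have e1 : (bU i : E) = B1 (Sum.inl i') := by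
      have eUi : fU i' = ⟨(bU ⟨i'.1, hi'k⟩ : E), hUW (bU ⟨i'.1, hi'k⟩).2⟩ := dif_pos hi'k
      rw [hB1 i', hbWU i' hi'k, eUi]
    rw [e1, hg]
    have eVi : fV i' = ⟨(bV ⟨i'.1, hi'm⟩ : E), hVW (bV ⟨i'.1, hi'm⟩).2⟩ := dif_pos hi'm
    rw [hB2 i', hbWV i' hi'm, eVi]
    exact (bV ⟨i'.1, hi'm⟩).2
  intro x hx
  have hUspan : U = span ℝ (Set.range fun i : Fin k => (bU i : E)) := by
    have h2 : (Set.range fun i : Fin k => (bU i : E)) = U.subtype '' Set.range ⇑bU := by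
      rw [← Set.range_comp]; rfl
    rw [h2, ← Submodule.map_span, ← OrthonormalBasis.coe_toBasis bU, bU.toBasis.span_eq,
      Submodule.map_top, Submodule.range_subtype]
  have hle : U ≤ Submodule.comap
      (B1.repr.trans B2.repr.symm).toLinearEquiv.toLinearMap V := by
    rw [hUspan, span_le]
    rintro t ⟨i, rfl⟩
    exact hgen i
  exact hle hx

/-- Let `C` be an infinite set and `H = ℓ²(C)`.  For every `m`, the orbit
space `B(H)^m / O(H)` is compact, where `O(H)` (the group of linear isometric automorphisms
of `H`) acts diagonally; equivalently, `B(H)^m` is compact for the quotient pseudometric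
`(d/O(H))((xᵢ),(yᵢ)) = inf_{g ∈ O(H)} max_i ‖xᵢ − g·yᵢ‖`. -/
theorem stmt14 (C : Type) (hC : Infinite C) (m : ℕ) :
    @IsCompact (Fin m → l2 C)
      (ballTopology (fun x y => ⨅ g : l2 C ≃ₗᵢ[ℝ] l2 C, ⨆ i : Fin m, ‖x i - g (y i)‖))
      {x | ∀ i, ‖x i‖ ≤ 1} := by
  classical
  haveI := hC
  haveI : Nonempty (l2 C ≃ₗᵢ[ℝ] l2 C) := ⟨LinearIsometryEquiv.refl ℝ _⟩
  set d : (Fin m → l2 C) → (Fin m → l2 C) → ℝ :=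
    fun x y => ⨅ g : l2 C ≃ₗᵢ[ℝ] l2 C, ⨆ i : Fin m, ‖x i - g (y i)‖ with hd
  have hbdd : ∀ (c y : Fin m → l2 C),
      BddBelow (Set.range fun g : l2 C ≃ₗᵢ[ℝ] l2 C => ⨆ i : Fin m, ‖c i - g (y i)‖) := by
    intro c y
    exact ⟨0, by rintro r ⟨g, rfl⟩; exact Real.iSup_nonneg fun i => norm_nonneg _⟩
  have hlip : ∀ x y y' : Fin m → l2 C, d x y' ≤ d x y + dist y y' := by
    intro x y y'
    have key : ∀ g : l2 C ≃ₗᵢ[ℝ] l2 C,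
        d x y' ≤ (⨆ i : Fin m, ‖x i - g (y i)‖) + dist y y' := by
      intro g
      refine (ciInf_le (hbdd x y') g).trans ?_
      refine Real.iSup_le (fun i => ?_)
        (add_nonneg (Real.iSup_nonneg fun i => norm_nonneg _) dist_nonneg)
      calc ‖x i - g (y' i)‖ = dist (x i) (g (y' i)) := (dist_eq_norm _ _).symm
        _ ≤ dist (x i) (g (y i)) + dist (g (y i)) (g (y' i)) := dist_triangle _ _ _
        _ ≤ (⨆ i : Fin m, ‖x i - g (y i)‖) + dist y y' := by
            gcongr
            · rw [dist_eq_norm]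
              exact le_ciSup (f := fun i : Fin m => ‖x i - g (y i)‖)
                (Set.finite_range _).bddAbove i
            · rw [g.dist_map]
              exact dist_le_pi_dist y y' i
    have h2 : d x y' - dist y y' ≤
        ⨅ g : l2 C ≃ₗᵢ[ℝ] l2 C, ⨆ i : Fin m, ‖x i - g (y i)‖ :=
      le_ciInf fun g => sub_le_iff_le_add.mpr (key g)
    rw [hd]
    linarith [h2]
  have hopen : ∀ (c : Fin m → l2 C) (ε : ℝ), IsOpen {y | d c y < ε} := by
    intro c ε
    rw [Metric.isOpen_iff]
    intro y hy
    simp only [Set.mem_setOf_eq] at hy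
    refine ⟨ε - d c y, by linarith, fun y' hy' => ?_⟩
    have h2 : d c y' ≤ d c y + dist y y' := hlip c y y'
    have h3 : dist y y' < ε - d c y := by rw [dist_comm]; exact hy'
    simp only [Set.mem_setOf_eq]
    linarith
  have hletop : (inferInstance : TopologicalSpace (Fin m → l2 C)) ≤ ballTopology d := by
    apply le_generateFrom
    rintro s ⟨c, ε, hε, rfl⟩
    exact hopen c ε
  obtain ⟨ι⟩ : Nonempty (Fin m ↪ C) := ⟨(Fin.valEmbedding).trans (Infinite.natEmbedding C)⟩
  set e : Fin m → l2 C := fun j => lp.single 2 (ι j) 1 with he'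
  have he : Orthonormal ℝ e := by
    rw [orthonormal_iff_ite]
    intro i j
    rw [he']
    dsimp only
    rw [lp.inner_single_left]
    rcases eq_or_ne i j with rfl | hij
    · simp [lp.single_apply]
    · have hne : ι i ≠ ι j := fun hcon => hij (ι.injective hcon)
      simp [lp.single_apply, hne, hij]
  set V := span ℝ (Set.range e) with hV
  haveI : FiniteDimensional ℝ V := FiniteDimensional.span_of_finite ℝ (Set.finite_range e)
  set B : Set (l2 C) := {z | z ∈ V ∧ ‖z‖ ≤ 1} with hB
  have hBc : IsCompact B := by
    have h1 : IsCompact (Metric.closedBall (0 : V) 1) := isCompact_closedBall _ _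
    have h2 : B = Subtype.val '' Metric.closedBall (0 : V) 1 := by
      ext z
      constructor
      · rintro ⟨hzV, hz1⟩
        exact ⟨⟨z, hzV⟩, by simpa [Metric.mem_closedBall, dist_eq_norm] using hz1, rfl⟩
      · rintro ⟨v, hv, rfl⟩
        exact ⟨v.2, by simpa [Metric.mem_closedBall, dist_eq_norm] using hv⟩
    rw [h2]
    exact h1.image continuous_subtype_val
  set K : Set (Fin m → l2 C) := Set.pi Set.univ (fun _ => B) with hK
  have hKc : IsCompact K := isCompact_univ_pi fun _ => hBc
  have hKc' : @IsCompact _ (ballTopology d) K := by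
    rw [← Set.image_id K]
    exact @IsCompact.image _ _ _ (ballTopology d) K id hKc (continuous_id_of_le hletop)
  refine @isCompact_of_finite_subcover _ (ballTopology d) _ ?_
  intro ι' Uo hUo hcov
  have hKS : K ⊆ {x | ∀ i, ‖x i‖ ≤ 1} := fun y hy i => (hy i (Set.mem_univ i)).2
  obtain ⟨t, ht⟩ := @IsCompact.elim_finite_subcover _ (ballTopology d) _ _ hKc' Uo hUo
    (hKS.trans hcov)
  refine ⟨t, fun x hx => ?_⟩
  set Ux := span ℝ (Set.range x) with hUx
  haveI : FiniteDimensional ℝ Ux := FiniteDimensional.span_of_finite ℝ (Set.finite_range x)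
  have hrank : finrank ℝ Ux ≤ finrank ℝ V := by
    have h1 : finrank ℝ Ux ≤ m := by
      have := finrank_range_le_card (R := ℝ) x
      simpa [Set.finrank] using this
    have h2 : finrank ℝ V = m := by
      rw [hV, finrank_span_eq_card he.linearIndependent]
      simp
    omega
  obtain ⟨g, hg⟩ := exists_isometryEquiv_map_mem Ux V hrank
  set kx : Fin m → l2 C := fun i => g (x i) with hkx
  have hkK : kx ∈ K := by
    intro i _
    refine ⟨hg (x i) (Submodule.subset_span ⟨i, rfl⟩), ?_⟩
    rw [hkx]
    simpa [g.norm_map] using hx i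
  obtain ⟨a, hat, hka⟩ := Set.mem_iUnion₂.mp (ht hkK)
  have hdle : ∀ c, d c x ≤ d c kx := by
    intro c
    refine le_ciInf fun h => ?_
    refine (ciInf_le (hbdd c x) (g.trans h)).trans (le_of_eq ?_)
    congr 1
  have key : ∀ s, TopologicalSpace.GenerateOpen
      {s | ∃ c ε, 0 < ε ∧ s = {y | d c y < ε}} s → kx ∈ s → x ∈ s := by
    intro s hs
    induction hs with
    | basic u hu =>
        obtain ⟨c, ε, hε, rfl⟩ := hu
        intro hk
        exact lt_of_le_of_lt (hdle c) hk
    | univ => intro _; trivial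
    | inter u v hu hv ihu ihv => intro hk; exact ⟨ihu hk.1, ihv hk.2⟩
    | sUnion S hS ih =>
        intro hk
        obtain ⟨u, huS, hku⟩ := hk
        exact ⟨u, huS, ih u huS hku⟩
  exact Set.mem_iUnion₂.mpr ⟨a, hat, key _ (hUo a) hka⟩
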